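/- arXiv:1606.05863 — 5 statements merged into one kernel-verified Lean document; each statement's English description precedes it below -/
import Mathlib

section
/- Let A be an invertible linear map on ℝ², and let v, w be nonzero vectors in ℝ². Then (1/(‖A‖·‖A⁻¹‖)) · |sin ∠(v,w)| ≤ |sin ∠(Av, Aw)| ≤ ‖A‖·‖A⁻¹‖ · |sin ∠(v,w)|, where ∠(u,u') denotes the angle between u and u' and ‖·‖ is the operator norm. -/
set_option maxRecDepth 4000

noncomputable abbrev E2 := EuclideanSpace ℝ (Fin 2)

/-- `|sin ∠(v,w)| = |det(v,w)| / (‖v‖·‖w‖)` for vectors in ℝ². -/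
noncomputable def sinAngle (v w : E2) : ℝ :=
  |v 0 * w 1 - v 1 * w 0| / (‖v‖ * ‖w‖)

noncomputable def detA (A : E2 →L[ℝ] E2) : ℝ :=
  (A (EuclideanSpace.single 0 1)) 0 * (A (EuclideanSpace.single 1 1)) 1
    - (A (EuclideanSpace.single 0 1)) 1 * (A (EuclideanSpace.single 1 1)) 0

lemma decomp (v : E2) : v = v 0 • EuclideanSpace.single 0 (1:ℝ) + v 1 • EuclideanSpace.single 1 1 := by
  ext i; fin_cases i <;> simp [EuclideanSpace.single_apply]

lemma apply_coord (A : E2 →L[ℝ] E2) (v : E2) (j : Fin 2) :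
    (A v) j = v 0 * (A (EuclideanSpace.single 0 1)) j + v 1 * (A (EuclideanSpace.single 1 1)) j := by
  conv_lhs => rw [decomp v]
  rw [map_add, map_smul, map_smul, PiLp.add_apply, PiLp.smul_apply, PiLp.smul_apply,
    smul_eq_mul, smul_eq_mul]

lemma det_map (A : E2 →L[ℝ] E2) (v w : E2) :
    (A v) 0 * (A w) 1 - (A v) 1 * (A w) 0 = detA A * (v 0 * w 1 - v 1 * w 0) := by
  rw [apply_coord A v 0, apply_coord A v 1, apply_coord A w 0, apply_coord A w 1, detA]; ring

lemma normsq (x : E2) : ‖x‖^2 = x 0^2 + x 1^2 := by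
  rw [EuclideanSpace.norm_eq, Real.sq_sqrt (by positivity)]
  simp [Fin.sum_univ_two, sq]

lemma det_le (u u' : E2) : |u 0 * u' 1 - u 1 * u' 0| ≤ ‖u‖ * ‖u'‖ := by
  have h : (u 0 * u' 1 - u 1 * u' 0)^2 ≤ (‖u‖ * ‖u'‖)^2 := by
    rw [mul_pow, normsq, normsq]; nlinarith [sq_nonneg (u 0 * u' 0 + u 1 * u' 1)]
  calc |u 0 * u' 1 - u 1 * u' 0| = Real.sqrt ((u 0 * u' 1 - u 1 * u' 0)^2) :=
        (Real.sqrt_sq_eq_abs _).symm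
    _ ≤ Real.sqrt ((‖u‖ * ‖u'‖)^2) := Real.sqrt_le_sqrt h
    _ = ‖u‖ * ‖u'‖ := Real.sqrt_sq (by positivity)

/-- Key: `|det A| ‖x‖ ≤ ‖A‖ ‖A x‖`. -/
lemma detA_le (A : E2 →L[ℝ] E2) (x : E2) : |detA A| * ‖x‖ ≤ ‖A‖ * ‖A x‖ := by
  set y : E2 := EuclideanSpace.single 0 (-(x 1)) + EuclideanSpace.single 1 (x 0) with hy
  have hy0 : y 0 = -(x 1) := by simp [hy, EuclideanSpace.single_apply]
  have hy1 : y 1 = x 0 := by simp [hy, EuclideanSpace.single_apply]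
  have hny : ‖y‖ = ‖x‖ := by
    have : ‖y‖^2 = ‖x‖^2 := by rw [normsq, normsq, hy0, hy1]; ring
    have h1 : (0:ℝ) ≤ ‖y‖ := norm_nonneg _
    have h2 : (0:ℝ) ≤ ‖x‖ := norm_nonneg _
    nlinarith
  have hdxy : x 0 * y 1 - x 1 * y 0 = ‖x‖^2 := by rw [hy0, hy1, normsq]; ring
  have h1 : |detA A| * ‖x‖^2 = |(A x) 0 * (A y) 1 - (A x) 1 * (A y) 0| := by
    rw [det_map, hdxy, abs_mul, abs_of_nonneg (by positivity : (0:ℝ) ≤ ‖x‖^2)]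
  have h2 : |(A x) 0 * (A y) 1 - (A x) 1 * (A y) 0| ≤ ‖A x‖ * (‖A‖ * ‖x‖) := by
    calc |(A x) 0 * (A y) 1 - (A x) 1 * (A y) 0| ≤ ‖A x‖ * ‖A y‖ := det_le _ _
      _ ≤ ‖A x‖ * (‖A‖ * ‖x‖) := by
          have := A.le_opNorm y
          rw [hny] at this
          exact mul_le_mul_of_nonneg_left this (norm_nonneg _)
  rcases eq_or_ne x 0 with rfl | hx
  · simp
  · have hxpos : 0 < ‖x‖ := norm_pos_iff.mpr hx
    have := h1 ▸ h2
    calc |detA A| * ‖x‖ = (|detA A| * ‖x‖^2) / ‖x‖ := by field_simp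
      _ ≤ (‖A x‖ * (‖A‖ * ‖x‖)) / ‖x‖ := by exact div_le_div_of_nonneg_right this hxpos.le
      _ = ‖A‖ * ‖A x‖ := by field_simp

lemma upper (A : E2 ≃L[ℝ] E2) (v w : E2) (hv : v ≠ 0) (hw : w ≠ 0) :
    sinAngle (A v) (A w)
      ≤ ‖(A : E2 →L[ℝ] E2)‖ * ‖(A.symm : E2 →L[ℝ] E2)‖ * sinAngle v w := by
  have hAv : (A : E2 →L[ℝ] E2) v ≠ 0 := by
    simpa using (A.map_ne_zero_iff.mpr hv)
  have hAw : (A : E2 →L[ℝ] E2) w ≠ 0 := by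
    simpa using (A.map_ne_zero_iff.mpr hw)
  have hv0 : 0 < ‖v‖ := norm_pos_iff.mpr hv
  have hw0 : 0 < ‖w‖ := norm_pos_iff.mpr hw
  have hAv0 : 0 < ‖(A : E2 →L[ℝ] E2) v‖ := norm_pos_iff.mpr hAv
  have hAw0 : 0 < ‖(A : E2 →L[ℝ] E2) w‖ := norm_pos_iff.mpr hAw
  have key1 : |detA (A : E2 →L[ℝ] E2)| * ‖v‖ ≤ ‖(A : E2 →L[ℝ] E2)‖ * ‖(A : E2 →L[ℝ] E2) v‖ :=
    detA_le _ v
  have key2 : ‖w‖ ≤ ‖(A.symm : E2 →L[ℝ] E2)‖ * ‖(A : E2 →L[ℝ] E2) w‖ := by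
    have := (A.symm : E2 →L[ℝ] E2).le_opNorm ((A : E2 →L[ℝ] E2) w)
    simpa using this
  show sinAngle ((A : E2 →L[ℝ] E2) v) ((A : E2 →L[ℝ] E2) w) ≤ _
  unfold sinAngle
  rw [det_map, abs_mul, ← mul_div_assoc,
    div_le_div_iff₀ (by positivity) (by positivity)]
  have hD : (0:ℝ) ≤ |v 0 * w 1 - v 1 * w 0| := abs_nonneg _
  nlinarith [mul_le_mul key1 key2 (norm_nonneg w) (by positivity :
      (0:ℝ) ≤ ‖(A : E2 →L[ℝ] E2)‖ * ‖(A : E2 →L[ℝ] E2) v‖),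
    abs_nonneg (detA (A : E2 →L[ℝ] E2)), norm_nonneg ((A : E2 →L[ℝ] E2) v),
    norm_nonneg ((A : E2 →L[ℝ] E2) w)]

theorem stmt0 (A : E2 ≃L[ℝ] E2) (v w : E2) (hv : v ≠ 0) (hw : w ≠ 0) :
    (1 / (‖(A : E2 →L[ℝ] E2)‖ * ‖(A.symm : E2 →L[ℝ] E2)‖)) * sinAngle v w
        ≤ sinAngle (A v) (A w) ∧
      sinAngle (A v) (A w)
        ≤ ‖(A : E2 →L[ℝ] E2)‖ * ‖(A.symm : E2 →L[ℝ] E2)‖ * sinAngle v w := by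
  have hAv : A v ≠ 0 := A.map_ne_zero_iff.mpr hv
  have hAw : A w ≠ 0 := A.map_ne_zero_iff.mpr hw
  have hone : (1:ℝ) ≤ ‖(A : E2 →L[ℝ] E2)‖ * ‖(A.symm : E2 →L[ℝ] E2)‖ := by
    have hid : (A.symm : E2 →L[ℝ] E2).comp (A : E2 →L[ℝ] E2) = ContinuousLinearMap.id ℝ E2 := by
      ext x; simp
    calc (1:ℝ) = ‖ContinuousLinearMap.id ℝ E2‖ := (ContinuousLinearMap.norm_id).symm
      _ = ‖(A.symm : E2 →L[ℝ] E2).comp (A : E2 →L[ℝ] E2)‖ := by rw [hid]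
      _ ≤ ‖(A.symm : E2 →L[ℝ] E2)‖ * ‖(A : E2 →L[ℝ] E2)‖ := ContinuousLinearMap.opNorm_comp_le _ _
      _ = _ := mul_comm _ _
  have hpos : 0 < ‖(A : E2 →L[ℝ] E2)‖ * ‖(A.symm : E2 →L[ℝ] E2)‖ := lt_of_lt_of_le one_pos hone
  constructor
  · have h := upper A.symm (A v) (A w) hAv hAw
    rw [A.symm_apply_apply, A.symm_apply_apply, A.symm_symm] at h
    rw [one_div, inv_mul_le_iff₀ hpos] at *
    linarith [h, mul_comm ‖(A : E2 →L[ℝ] E2)‖ ‖(A.symm : E2 →L[ℝ] E2)‖]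
  · exact upper A v w hv hw
end

section
/- Let (c_n)_{n∈ℤ} be a sequence of positive reals such that lim_{n→±∞} (1/|n|) log c_n = 0, let ε > 0, and define q := δ · inf{e^{ε|n|} c_n : n ∈ ℤ} for some constant δ ∈ (0,1). Then the infimum is attained and positive, q ≤ δ c_0, and if q' := δ · inf{e^{ε|n|} c_{n+1} : n ∈ ℤ} then e^{−ε} q ≤ q' ≤ e^{ε} q. -/
open Filter

private lemma aux_large (c : ℤ → ℝ) (hc : ∀ n, 0 < c n)
    (htempPos : Tendsto (fun n : ℕ => Real.log (c n) / (n : ℝ)) atTop (nhds 0))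
    (htempNeg : Tendsto (fun n : ℕ => Real.log (c (-n)) / (n : ℝ)) atTop (nhds 0))
    (ε : ℝ) (hε : 0 < ε) :
    ∃ N : ℕ, ∀ n : ℤ, (N : ℕ) ≤ n.natAbs → c 0 < Real.exp (ε * |(n : ℝ)|) * c n := by
  have h1 : ∀ᶠ m : ℕ in atTop, -(ε/2) < Real.log (c m) / (m : ℝ) :=
    htempPos.eventually (eventually_gt_nhds (by linarith))
  have h2 : ∀ᶠ m : ℕ in atTop, -(ε/2) < Real.log (c (-m)) / (m : ℝ) :=
    htempNeg.eventually (eventually_gt_nhds (by linarith))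
  obtain ⟨N₁, hN₁⟩ := h1.exists_forall_of_atTop
  obtain ⟨N₂, hN₂⟩ := h2.exists_forall_of_atTop
  set N : ℕ := max (max N₁ N₂) (⌈2 * Real.log (c 0) / ε⌉₊ + 1) with hNdef
  have hNbig : Real.log (c 0) < ε / 2 * N := by
    have hle : (2 * Real.log (c 0) / ε) < (N : ℝ) := by
      calc (2 * Real.log (c 0) / ε) ≤ (⌈2 * Real.log (c 0) / ε⌉₊ : ℝ) := Nat.le_ceil _
        _ < (⌈2 * Real.log (c 0) / ε⌉₊ + 1 : ℕ) := by push_cast; linarith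
        _ ≤ (N : ℝ) := by exact_mod_cast Nat.cast_le.mpr (le_max_right _ _)
    rw [div_lt_iff₀ hε] at hle
    nlinarith
  refine ⟨N, ?_⟩
  intro n hn
  have key : ∀ m : ℕ, N ≤ m → ∀ x : ℝ, x = c (m : ℤ) ∨ x = c (-(m : ℤ)) →
      c 0 < Real.exp (ε * m) * x := by
    intro m hm x hx
    have hm1 : (1 : ℕ) ≤ m := le_trans (le_trans (Nat.le_add_left 1 _) (le_max_right _ _)) hm
    have hmR : (1 : ℝ) ≤ (m : ℝ) := by exact_mod_cast hm1
    have hxpos : 0 < x := by rcases hx with h | h <;> simp [h, hc]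
    have hlog : -(ε/2) < Real.log x / (m : ℝ) := by
      rcases hx with h | h
      · subst h; exact hN₁ m (le_trans (le_trans (le_max_left _ _) (le_max_left _ _)) hm)
      · subst h; exact hN₂ m (le_trans (le_trans (le_max_right _ _) (le_max_left _ _)) hm)
    have hlog' : -(ε/2) * m < Real.log x := by
      rw [lt_div_iff₀ (by linarith : (0:ℝ) < m)] at hlog
      linarith
    have hNm : (N : ℝ) ≤ (m : ℝ) := by exact_mod_cast hm
    have : Real.log (c 0) < ε * m + Real.log x := by nlinarith
    calc c 0 = Real.exp (Real.log (c 0)) := (Real.exp_log (hc 0)).symm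
      _ < Real.exp (ε * m + Real.log x) := Real.exp_lt_exp.mpr this
      _ = Real.exp (ε * m) * x := by rw [Real.exp_add, Real.exp_log hxpos]
  have habs : |(n : ℝ)| = (n.natAbs : ℝ) := by
    rw [Nat.cast_natAbs, Int.cast_abs]
  rcases Int.natAbs_eq n with h | h
  · have hk := key n.natAbs hn (c (n.natAbs : ℤ)) (Or.inl rfl)
    rw [← h] at hk
    rwa [habs]
  · have hk := key n.natAbs hn (c (-(n.natAbs : ℤ))) (Or.inr rfl)
    rw [← h] at hk
    rwa [habs]

theorem stmt6 (c : ℤ → ℝ) (hc : ∀ n, 0 < c n)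
    (htempPos : Tendsto (fun n : ℕ => Real.log (c n) / (n : ℝ)) atTop (nhds 0))
    (htempNeg : Tendsto (fun n : ℕ => Real.log (c (-n)) / (n : ℝ)) atTop (nhds 0))
    (ε δ : ℝ) (hε : 0 < ε) (hδ : δ ∈ Set.Ioo (0 : ℝ) 1) :
    (∃ n₀ : ℤ, sInf (Set.range fun n : ℤ => Real.exp (ε * |(n : ℝ)|) * c n)
        = Real.exp (ε * |(n₀ : ℝ)|) * c n₀) ∧
      0 < sInf (Set.range fun n : ℤ => Real.exp (ε * |(n : ℝ)|) * c n) ∧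
      δ * sInf (Set.range fun n : ℤ => Real.exp (ε * |(n : ℝ)|) * c n) ≤ δ * c 0 ∧
      Real.exp (-ε) * (δ * sInf (Set.range fun n : ℤ => Real.exp (ε * |(n : ℝ)|) * c n))
        ≤ δ * sInf (Set.range fun n : ℤ => Real.exp (ε * |(n : ℝ)|) * c (n + 1)) ∧
      δ * sInf (Set.range fun n : ℤ => Real.exp (ε * |(n : ℝ)|) * c (n + 1))
        ≤ Real.exp ε * (δ * sInf (Set.range fun n : ℤ => Real.exp (ε * |(n : ℝ)|) * c n)) := by
  obtain ⟨hδ0, hδ1⟩ := hδ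
  set g : ℤ → ℝ := fun n => Real.exp (ε * |(n : ℝ)|) * c n with hg
  set g' : ℤ → ℝ := fun n => Real.exp (ε * |(n : ℝ)|) * c (n + 1) with hg'
  have hgpos : ∀ n, 0 < g n := fun n => mul_pos (Real.exp_pos _) (hc n)
  have hg'pos : ∀ n, 0 < g' n := fun n => mul_pos (Real.exp_pos _) (hc (n + 1))
  obtain ⟨N, hN⟩ := aux_large c hc htempPos htempNeg ε hε
  -- minimizer on the finite interval
  have hF : ((0 : ℤ)) ∈ Finset.Icc (-(N : ℤ)) (N : ℤ) := by
    simp [Finset.mem_Icc]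
  obtain ⟨n₀, hn₀F, hn₀min⟩ := Finset.exists_min_image (Finset.Icc (-(N : ℤ)) (N : ℤ)) g ⟨0, hF⟩
  have hg0 : g 0 = c 0 := by simp [hg]
  have hlb : ∀ n : ℤ, g n₀ ≤ g n := by
    intro n
    by_cases hmem : n ∈ Finset.Icc (-(N : ℤ)) (N : ℤ)
    · exact hn₀min n hmem
    · have : (N : ℕ) ≤ n.natAbs := by
        simp only [Finset.mem_Icc, not_and_or, not_le] at hmem
        rcases hmem with h | h
        · omega
        · omega
      have := hN n this
      calc g n₀ ≤ g 0 := hn₀min 0 hF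
        _ = c 0 := hg0
        _ ≤ g n := le_of_lt this
  have hbdd : BddBelow (Set.range g) := ⟨g n₀, by rintro x ⟨n, rfl⟩; exact hlb n⟩
  have hne : (Set.range g).Nonempty := ⟨g 0, 0, rfl⟩
  have hsinf : sInf (Set.range g) = g n₀ :=
    le_antisymm (csInf_le hbdd ⟨n₀, rfl⟩)
      (le_csInf hne (by rintro x ⟨n, rfl⟩; exact hlb n))
  have hbdd' : BddBelow (Set.range g') := ⟨0, by rintro x ⟨n, rfl⟩; exact (hg'pos n).le⟩
  have hne' : (Set.range g').Nonempty := ⟨g' 0, 0, rfl⟩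
  refine ⟨⟨n₀, hsinf⟩, ?_, ?_, ?_, ?_⟩
  · rw [hsinf]; exact hgpos n₀
  · have : sInf (Set.range g) ≤ c 0 := by
      rw [hsinf, ← hg0]; exact hn₀min 0 hF
    exact mul_le_mul_of_nonneg_left this hδ0.le
  · -- lower shift bound
    have key : Real.exp (-ε) * sInf (Set.range g) ≤ sInf (Set.range g') := by
      apply le_csInf hne'
      rintro x ⟨n, rfl⟩
      have h1 : sInf (Set.range g) ≤ g (n + 1) := csInf_le hbdd ⟨n + 1, rfl⟩
      have habs : |((n : ℝ) + 1)| - 1 ≤ |(n : ℝ)| := by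
        have := abs_add_le (n : ℝ) 1
        simp at this ⊢
        linarith
      have h2 : Real.exp (-ε) * g (n + 1) ≤ g' n := by
        simp only [hg, hg']
        rw [← mul_assoc, ← Real.exp_add]
        push_cast
        apply mul_le_mul_of_nonneg_right _ (hc (n + 1)).le
        apply Real.exp_le_exp.mpr
        nlinarith
      calc Real.exp (-ε) * sInf (Set.range g) ≤ Real.exp (-ε) * g (n + 1) :=
            mul_le_mul_of_nonneg_left h1 (Real.exp_pos _).le
        _ ≤ g' n := h2
    calc Real.exp (-ε) * (δ * sInf (Set.range g))
        = δ * (Real.exp (-ε) * sInf (Set.range g)) := by ring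
      _ ≤ δ * sInf (Set.range g') := mul_le_mul_of_nonneg_left key hδ0.le
  · -- upper shift bound
    have key : sInf (Set.range g') ≤ Real.exp ε * sInf (Set.range g) := by
      rw [hsinf]
      have h1 : sInf (Set.range g') ≤ g' (n₀ - 1) := csInf_le hbdd' ⟨n₀ - 1, rfl⟩
      have h2 : g' (n₀ - 1) ≤ Real.exp ε * g n₀ := by
        simp only [hg, hg']
        rw [sub_add_cancel, ← mul_assoc, ← Real.exp_add]
        push_cast
        apply mul_le_mul_of_nonneg_right _ (hc n₀).le
        apply Real.exp_le_exp.mpr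
        have : |(n₀ : ℝ) - 1| ≤ |(n₀ : ℝ)| + 1 := by
          have := abs_sub (n₀ : ℝ) 1
          calc |(n₀ : ℝ) - 1| ≤ |(n₀ : ℝ)| + |(1:ℝ)| := abs_sub _ _
            _ = |(n₀ : ℝ)| + 1 := by simp
        nlinarith
      linarith
    calc δ * sInf (Set.range g') ≤ δ * (Real.exp ε * sInf (Set.range g)) :=
          mul_le_mul_of_nonneg_left key hδ0.le
      _ = Real.exp ε * (δ * sInf (Set.range g)) := by ring
end

section
/- Suppose R is a 2×2 rotation matrix and v₁ = (1,0) + e₁, v₂ = R·(1,0) + e₂ are nonzero vectors with v₁ proportional to v₂ (v₁ = t·v₂ for some t ≠ 0), where ‖e₁‖, ‖e₂‖ ≤ η for some η < 1/10. Then R = ±Id + E where every entry of E has absolute value at most C·η for some absolute constant C. -/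
set_option maxHeartbeats 800000 in
lemma aux10 (η t c sn f g p q : ℝ) (hη : 0 < η) (hη' : η < 1/10) (ht : 0 < t)
    (hcs : c ^ 2 + sn ^ 2 = 1)
    (hf : |f| ≤ η) (hg : |g| ≤ η) (hp : |p| ≤ η) (hq : |q| ≤ η)
    (eq0 : 1 + f = t * (c + p)) (eq1 : g = t * (sn + q)) :
    |c - 1| ≤ 100 * η ∧ |sn| ≤ 100 * η := by
  obtain ⟨hf1, hf2⟩ := abs_le.mp hf
  obtain ⟨hg1, hg2⟩ := abs_le.mp hg
  obtain ⟨hp1, hp2⟩ := abs_le.mp hp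
  obtain ⟨hq1, hq2⟩ := abs_le.mp hq
  have hc1 : c ≤ 1 := by nlinarith [sq_nonneg sn, sq_nonneg (c - 1)]
  have hp' : t * p ≤ t * η := mul_le_mul_of_nonneg_left hp2 ht.le
  have hp'' : -(t * η) ≤ t * p := by
    have := mul_le_mul_of_nonneg_left hp1 ht.le; linarith
  have hq' : t * q ≤ t * η := mul_le_mul_of_nonneg_left hq2 ht.le
  have hq'' : -(t * η) ≤ t * q := by
    have := mul_le_mul_of_nonneg_left hq1 ht.le; linarith
  have hA : t * c = 1 + f - t * p := by linear_combination -eq0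
  have hB : t * sn = g - t * q := by linear_combination -eq1
  have hAu : t * c ≤ 1 + η + t * η := by linarith
  have hAl : 1 - η - t * η ≤ t * c := by linarith
  have hBu : t * sn ≤ η + t * η := by linarith
  have hBl : -(η + t * η) ≤ t * sn := by linarith
  have ht2 : t ^ 2 = (t * c) ^ 2 + (t * sn) ^ 2 := by
    have h : (t * c) ^ 2 + (t * sn) ^ 2 = t ^ 2 * (c ^ 2 + sn ^ 2) := by ring
    rw [h, hcs, mul_one]
  have hηt : 0 ≤ t * η := by positivity
  have sq1 : (t * c) ^ 2 ≤ (1 + η + t * η) ^ 2 := sq_le_sq' (by linarith) hAu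
  have sq2 : (t * sn) ^ 2 ≤ (η + t * η) ^ 2 := sq_le_sq' (by linarith) hBu
  have hquad : t ^ 2 ≤ (1 + η + t * η) ^ 2 + (η + t * η) ^ 2 := by linarith
  have hηt' : t * η ≤ t / 10 := by
    have := mul_le_mul_of_nonneg_left hη'.le ht.le
    linarith
  have a1 : (1 + η + t * η) ^ 2 ≤ (11/10 + t/10) ^ 2 :=
    sq_le_sq' (by linarith) (by linarith)
  have a2 : (η + t * η) ^ 2 ≤ (1/10 + t/10) ^ 2 :=
    sq_le_sq' (by linarith) (by linarith)
  have e11 : (11/10 + t/10) ^ 2 = 121/100 + 11/50 * t + t^2/100 := by ring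
  have e12 : (1/10 + t/10) ^ 2 = 1/100 + t/50 + t^2/100 := by ring
  have e13 : t ^ 2 - 3 * t + 9/4 ≥ 0 := by nlinarith [sq_nonneg (t - 3/2)]
  have htu : t ≤ 3 / 2 := by linarith
  have htη : t * η ≤ 3/2 * η := mul_le_mul_of_nonneg_right htu hη.le
  have hc' : t * c ≤ t * 1 := mul_le_mul_of_nonneg_left hc1 ht.le
  have htl : 3 / 4 ≤ t := by linarith
  have b1 : (1 + η + t * η) ^ 2 ≤ (1 + 5/2 * η) ^ 2 :=
    sq_le_sq' (by linarith) (by linarith)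
  have b2 : (η + t * η) ^ 2 ≤ (5/2 * η) ^ 2 :=
    sq_le_sq' (by linarith) (by linarith)
  have e21 : (1 + 5/2 * η) ^ 2 = 1 + 5 * η + 25/4 * η^2 := by ring
  have e22 : (5/2 * η) ^ 2 = 25/4 * η^2 := by ring
  have e23 : η ^ 2 ≤ 1/10 * η := by
    rw [pow_two]
    exact mul_le_mul_of_nonneg_right hη'.le hη.le
  have hsq : t ^ 2 ≤ 1 + 7 * η := by linarith
  have htu2 : t ≤ 1 + 4 * η := by
    rcases le_or_gt t 1 with h | h
    · linarith
    · have h2 : (t - 1) * (7/4) ≤ (t - 1) * (t + 1) :=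
        mul_le_mul_of_nonneg_left (by linarith) (by linarith)
      have h3 : (t - 1) * (t + 1) = t ^ 2 - 1 := by ring
      linarith
  have h1c : t * (1 - c) ≤ 7 * η := by
    have h : t * (1 - c) = t - t * c := by ring
    linarith
  have hcl : 1 - c ≤ 100 * η := by
    have h2 := mul_le_mul_of_nonneg_right htl (by linarith : (0:ℝ) ≤ 1 - c)
    linarith
  have hsn : |sn| ≤ 100 * η := by
    rw [abs_le]
    constructor
    · rcases le_or_gt 0 sn with h | h
      · linarith
      · have h2 := mul_le_mul_of_nonneg_right htl (by linarith : (0:ℝ) ≤ -sn)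
        have h3 : t * -sn = -(t * sn) := by ring
        linarith
    · rcases le_or_gt sn 0 with h | h
      · linarith
      · have h2 := mul_le_mul_of_nonneg_right htl h.le
        linarith
  exact ⟨by rw [abs_le]; constructor <;> linarith, hsn⟩

theorem stmt10 (θ η t : ℝ) (hη : 0 < η) (hη' : η < 1 / 10) (ht : t ≠ 0)
    (R : Matrix (Fin 2) (Fin 2) ℝ)
    (hR : R = !![Real.cos θ, -Real.sin θ; Real.sin θ, Real.cos θ])
    (e₁ e₂ v₁ v₂ : Fin 2 → ℝ)
    (he₁ : Real.sqrt (e₁ 0 ^ 2 + e₁ 1 ^ 2) ≤ η)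
    (he₂ : Real.sqrt (e₂ 0 ^ 2 + e₂ 1 ^ 2) ≤ η)
    (hv₁ : v₁ = ![1, 0] + e₁) (hv₂ : v₂ = R.mulVec ![1, 0] + e₂)
    (hv₁0 : v₁ ≠ 0) (hv₂0 : v₂ ≠ 0)
    (hprop : v₁ = t • v₂) :
    ∃ s : ℝ, (s = 1 ∨ s = -1) ∧
      ∀ i j, |R i j - s * (1 : Matrix (Fin 2) (Fin 2) ℝ) i j| ≤ 100 * η := by
  have habs : ∀ a b : ℝ, Real.sqrt (a ^ 2 + b ^ 2) ≤ η → |a| ≤ η ∧ |b| ≤ η := by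
    intro a b h
    constructor
    · calc |a| = Real.sqrt (a ^ 2) := (Real.sqrt_sq_eq_abs a).symm
        _ ≤ Real.sqrt (a ^ 2 + b ^ 2) := Real.sqrt_le_sqrt (by nlinarith [sq_nonneg b])
        _ ≤ η := h
    · calc |b| = Real.sqrt (b ^ 2) := (Real.sqrt_sq_eq_abs b).symm
        _ ≤ Real.sqrt (a ^ 2 + b ^ 2) := Real.sqrt_le_sqrt (by nlinarith [sq_nonneg a])
        _ ≤ η := h
  obtain ⟨hf, hg⟩ := habs _ _ he₁
  obtain ⟨hp, hq⟩ := habs _ _ he₂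
  have h0 := congrFun hprop 0
  have h1 := congrFun hprop 1
  simp [hv₁, hv₂, hR, Matrix.mulVec, dotProduct, Fin.sum_univ_two,
    Matrix.vecHead, Matrix.vecTail] at h0 h1
  have eq0 : 1 + e₁ 0 = t * (Real.cos θ + e₂ 0) := by linarith [h0]
  have eq1 : e₁ 1 = t * (Real.sin θ + e₂ 1) := by linarith [h1]
  have hcs : Real.cos θ ^ 2 + Real.sin θ ^ 2 = 1 := by
    have := Real.sin_sq_add_cos_sq θ; linarith
  rcases lt_or_gt_of_ne ht with htn | htp
  · have key := aux10 η (-t) (-Real.cos θ) (-Real.sin θ) (e₁ 0) (e₁ 1) (-e₂ 0) (-e₂ 1)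
      hη hη' (by linarith) (by nlinarith) hf hg (by rwa [abs_neg]) (by rwa [abs_neg])
      (by rw [eq0]; ring) (by rw [eq1]; ring)
    obtain ⟨kc, ks⟩ := key
    rw [abs_neg] at ks
    refine ⟨-1, Or.inr rfl, ?_⟩
    intro i j
    rw [abs_le] at kc ks
    fin_cases i <;> fin_cases j <;>
      simp [hR, Matrix.one_apply] <;> rw [abs_le] <;>
      constructor <;> linarith [kc.1, kc.2, ks.1, ks.2]
  · have key := aux10 η t (Real.cos θ) (Real.sin θ) (e₁ 0) (e₁ 1) (e₂ 0) (e₂ 1)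
      hη hη' htp hcs hf hg hp hq eq0 eq1
    obtain ⟨kc, ks⟩ := key
    refine ⟨1, Or.inl rfl, ?_⟩
    intro i j
    rw [abs_le] at kc ks
    fin_cases i <;> fin_cases j <;>
      simp [hR, Matrix.one_apply] <;> rw [abs_le] <;>
      constructor <;> linarith [kc.1, kc.2, ks.1, ks.2]
end

section
/- Let a, c > 0, β ∈ (0,1), χ > 0, and let L : ℝ² → ℝ² be linear with ‖L‖ ≤ K. Suppose g = Θ ∘ F where F : U → ℝ² satisfies F(0)=0, ‖dF‖₀ ≤ K, ‖dF_v − dF_w‖ ≤ ε‖v−w‖^{β/2}, and Θ satisfies ‖Θ − Id‖_{C⁰} ≤ δ, ‖d(Θ − Id)‖₀ ≤ δ, ‖dΘ_v − dΘ_w‖ ≤ δ‖v−w‖^{β/2} on F(U). Then for all v,w ∈ U with ‖v−w‖ ≤ D: ‖dg_v − dg_w‖ ≤ (δ K^{1+β/2} + ε(K+δ+1) D^{β/6})·‖v−w‖^{β/3}. -/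
theorem stmt12 (a c χ ε δ β K D : ℝ) (ha : 0 < a) (hc : 0 < c) (hχ : 0 < χ)
    (hβ : β ∈ Set.Ioo (0 : ℝ) 1) (hε : 0 < ε) (hδ : 0 ≤ δ) (hK : 0 ≤ K)
    (hD : 0 < D) (hD1 : D ≤ 1)
    (L : E2 →L[ℝ] E2) (hL : ‖L‖ ≤ K)
    (U : Set E2) (hU : Convex ℝ U) (h0U : (0 : E2) ∈ U)
    (F Θ : E2 → E2) (DF DΘ : E2 → (E2 →L[ℝ] E2))
    (hF0 : F 0 = 0)
    (hFdiff : ∀ v ∈ U, HasFDerivAt F (DF v) v)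
    (hDFle : ∀ v ∈ U, ‖DF v‖ ≤ K)
    (hDFHol : ∀ v ∈ U, ∀ w ∈ U, ‖DF v - DF w‖ ≤ ε * ‖v - w‖ ^ (β / 2))
    (hΘ0 : ∀ y ∈ F '' U, ‖Θ y - y‖ ≤ δ)
    (hΘdiff : ∀ y ∈ F '' U, HasFDerivAt Θ (DΘ y) y)
    (hDΘle : ∀ y ∈ F '' U, ‖DΘ y - ContinuousLinearMap.id ℝ E2‖ ≤ δ)
    (hDΘHol : ∀ y ∈ F '' U, ∀ y' ∈ F '' U, ‖DΘ y - DΘ y'‖ ≤ δ * ‖y - y'‖ ^ (β / 2)) :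
    ∀ v ∈ U, ∀ w ∈ U, ‖v - w‖ ≤ D →
      ‖(DΘ (F v)).comp (DF v) - (DΘ (F w)).comp (DF w)‖
        ≤ (δ * K ^ (1 + β / 2) + ε * (K + δ + 1) * D ^ (β / 6)) * ‖v - w‖ ^ (β / 3) := by
  obtain ⟨hβ0, hβ1⟩ := hβ
  intro v hv w hw hvwD
  by_cases hvw : v = w
  · subst hvw
    simp [Real.zero_rpow (by positivity : β / 3 ≠ 0)]
  have hn : 0 < ‖v - w‖ := by
    rw [norm_pos_iff]
    exact sub_ne_zero.mpr hvw
  set n := ‖v - w‖ with hndef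
  have hn1 : n ≤ 1 := hvwD.trans hD1
  have hFv : F v ∈ F '' U := ⟨v, hv, rfl⟩
  have hFw : F w ∈ F '' U := ⟨w, hw, rfl⟩
  -- mean value estimate
  have hmvt : ‖F v - F w‖ ≤ K * n := by
    exact hU.norm_image_sub_le_of_norm_hasFDerivWithin_le
      (fun x hx => (hFdiff x hx).hasFDerivWithinAt) hDFle hw hv
  -- decomposition
  have key : (DΘ (F v)).comp (DF v) - (DΘ (F w)).comp (DF w)
      = (DΘ (F v) - DΘ (F w)).comp (DF v) + (DΘ (F w)).comp (DF v - DF w) := by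
    rw [ContinuousLinearMap.sub_comp, ContinuousLinearMap.comp_sub]
    abel
  -- term 1
  have hΘHol : ‖DΘ (F v) - DΘ (F w)‖ ≤ δ * (K ^ (β / 2) * n ^ (β / 2)) := by
    calc ‖DΘ (F v) - DΘ (F w)‖ ≤ δ * ‖F v - F w‖ ^ (β / 2) := hDΘHol _ hFv _ hFw
      _ ≤ δ * (K * n) ^ (β / 2) := by
          gcongr
      _ = δ * (K ^ (β / 2) * n ^ (β / 2)) := by
          rw [Real.mul_rpow hK hn.le]
  have t1 : ‖(DΘ (F v) - DΘ (F w)).comp (DF v)‖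
      ≤ δ * K ^ (1 + β / 2) * n ^ (β / 3) := by
    have h1 : ‖(DΘ (F v) - DΘ (F w)).comp (DF v)‖
        ≤ δ * (K ^ (β / 2) * n ^ (β / 2)) * K :=
      (ContinuousLinearMap.opNorm_comp_le _ _).trans
        (mul_le_mul hΘHol (hDFle v hv) (norm_nonneg _) (by positivity))
    have hKpow : K ^ (1 + β / 2) = K * K ^ (β / 2) := by
      rw [Real.rpow_add' hK (by positivity), Real.rpow_one]
    have hnpow : n ^ (β / 2) ≤ n ^ (β / 3) :=
      Real.rpow_le_rpow_of_exponent_ge hn hn1 (by linarith)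
    calc ‖(DΘ (F v) - DΘ (F w)).comp (DF v)‖
        ≤ δ * (K ^ (β / 2) * n ^ (β / 2)) * K := h1
      _ = δ * K ^ (1 + β / 2) * n ^ (β / 2) := by rw [hKpow]; ring
      _ ≤ δ * K ^ (1 + β / 2) * n ^ (β / 3) := by
          gcongr
  -- term 2
  have hΘle : ‖DΘ (F w)‖ ≤ δ + 1 := by
    calc ‖DΘ (F w)‖ = ‖(DΘ (F w) - ContinuousLinearMap.id ℝ E2)
          + ContinuousLinearMap.id ℝ E2‖ := by rw [sub_add_cancel]
      _ ≤ ‖DΘ (F w) - ContinuousLinearMap.id ℝ E2‖ + ‖(ContinuousLinearMap.id ℝ E2)‖ :=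
          norm_add_le _ _
      _ ≤ δ + 1 := add_le_add (hDΘle _ hFw) (ContinuousLinearMap.norm_id_le)
  have hnsplit : n ^ (β / 2) = n ^ (β / 6) * n ^ (β / 3) := by
    rw [← Real.rpow_add hn]; ring_nf
  have t2 : ‖(DΘ (F w)).comp (DF v - DF w)‖
      ≤ (δ + 1) * (ε * (D ^ (β / 6) * n ^ (β / 3))) := by
    have h2 : ‖(DΘ (F w)).comp (DF v - DF w)‖ ≤ (δ + 1) * (ε * n ^ (β / 2)) :=
      (ContinuousLinearMap.opNorm_comp_le _ _).trans
        (mul_le_mul hΘle (hDFHol v hv w hw) (norm_nonneg _) (by positivity))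
    refine h2.trans ?_
    gcongr
    rw [hnsplit]
    gcongr
  calc ‖(DΘ (F v)).comp (DF v) - (DΘ (F w)).comp (DF w)‖
      ≤ ‖(DΘ (F v) - DΘ (F w)).comp (DF v)‖ + ‖(DΘ (F w)).comp (DF v - DF w)‖ := by
        rw [key]; exact norm_add_le _ _
    _ ≤ δ * K ^ (1 + β / 2) * n ^ (β / 3) + (δ + 1) * (ε * (D ^ (β / 6) * n ^ (β / 3))) :=
        add_le_add t1 t2
    _ ≤ (δ * K ^ (1 + β / 2) + ε * (K + δ + 1) * D ^ (β / 6)) * n ^ (β / 3) := by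
        have : (δ + 1) * (ε * (D ^ (β / 6) * n ^ (β / 3)))
            ≤ ε * (K + δ + 1) * D ^ (β / 6) * n ^ (β / 3) := by
          have hDp : (0:ℝ) ≤ D ^ (β / 6) := by positivity
          have hnp : (0:ℝ) ≤ n ^ (β / 3) := by positivity
          nlinarith [mul_nonneg hDp hnp, mul_nonneg hK (mul_nonneg hDp hnp)]
        nlinarith [this]
end

section
/- Let s, s' : ℝ be defined from unit-norm data by s = ‖C e₁‖⁻¹ and s' = ‖C' e₁‖⁻¹ for invertible 2×2 matrices C, C' with ‖C‖ ≤ 1, ‖C − C'‖ < η⁴, and ‖C⁻¹‖ < η⁻¹ for η ∈ (0,1). Then |s/s' − 1| < η³, and hence s/s' = e^{±2η³} provided η³ ≤ 1/2. -/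
theorem stmt15 (η : ℝ) (hη : η ∈ Set.Ioo (0 : ℝ) 1)
    (C C' : E2 ≃L[ℝ] E2)
    (hC : ‖(C : E2 →L[ℝ] E2)‖ ≤ 1)
    (hclose : ‖(C : E2 →L[ℝ] E2) - (C' : E2 →L[ℝ] E2)‖ < η ^ 4)
    (hinv : ‖(C.symm : E2 →L[ℝ] E2)‖ < η⁻¹)
    (s s' : ℝ)
    (hs : s = ‖C (EuclideanSpace.single (0 : Fin 2) (1 : ℝ))‖⁻¹)
    (hs' : s' = ‖C' (EuclideanSpace.single (0 : Fin 2) (1 : ℝ))‖⁻¹) :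
    |s / s' - 1| < η ^ 3 ∧
      (η ^ 3 ≤ 1 / 2 →
        Real.exp (-(2 * η ^ 3)) ≤ s / s' ∧ s / s' ≤ Real.exp (2 * η ^ 3)) := by
  obtain ⟨hη0, hη1⟩ := hη
  set e : E2 := EuclideanSpace.single (0 : Fin 2) (1 : ℝ) with he
  have hne : ‖e‖ = 1 := by
    simp [he, EuclideanSpace.norm_single]
  set a := ‖C e‖ with ha
  set b := ‖C' e‖ with hb
  -- lower bound on a
  have h1 : (1 : ℝ) ≤ ‖(C.symm : E2 →L[ℝ] E2)‖ * a := by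
    have := (C.symm : E2 →L[ℝ] E2).le_opNorm (C e)
    simpa [hne] using this
  have hη3 : η ^ 3 < 1 := pow_lt_one₀ hη0.le hη1 three_ne_zero
  have hη4 : η ^ 4 < η := by nlinarith
  have hsymm_pos : 0 < ‖(C.symm : E2 →L[ℝ] E2)‖ := by
    by_contra h
    push_neg at h
    nlinarith [mul_nonpos_of_nonpos_of_nonneg h (norm_nonneg (C e))]
  have haη : η < a := by
    have h2 : ‖(C.symm : E2 →L[ℝ] E2)‖ * a < η⁻¹ * a := by
      apply mul_lt_mul_of_pos_right hinv
      nlinarith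
    have h3 : (1 : ℝ) < η⁻¹ * a := lt_of_le_of_lt h1 h2
    have := (mul_lt_mul_iff_right₀ hη0).mpr h3
    rwa [mul_one, ← mul_assoc, mul_inv_cancel₀ (ne_of_gt hη0), one_mul] at this
  have ha0 : 0 < a := lt_trans hη0 haη
  -- difference bound
  have hdiff : |b - a| < η ^ 4 := by
    have h4 : |b - a| ≤ ‖C' e - C e‖ := abs_norm_sub_norm_le _ _
    have h5 : ‖C' e - C e‖ = ‖((C : E2 →L[ℝ] E2) - (C' : E2 →L[ℝ] E2)) e‖ := by
      rw [ContinuousLinearMap.sub_apply, norm_sub_rev]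
      rfl
    have h6 : ‖((C : E2 →L[ℝ] E2) - (C' : E2 →L[ℝ] E2)) e‖ ≤
        ‖(C : E2 →L[ℝ] E2) - (C' : E2 →L[ℝ] E2)‖ := by
      have := ((C : E2 →L[ℝ] E2) - (C' : E2 →L[ℝ] E2)).le_opNorm e
      simpa [hne] using this
    calc |b - a| ≤ ‖((C : E2 →L[ℝ] E2) - (C' : E2 →L[ℝ] E2)) e‖ := h5 ▸ h4
      _ ≤ _ := h6
      _ < η ^ 4 := hclose
  have hb0 : 0 < b := by
    have : a - b ≤ |b - a| := by rw [abs_sub_comm]; exact le_abs_self _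
    linarith
  -- s/s' = b/a
  have hdiv : s / s' = b / a := by
    rw [hs, hs']
    field_simp
  have hkey : |s / s' - 1| < η ^ 3 := by
    rw [hdiv]
    have : b / a - 1 = (b - a) / a := by field_simp
    rw [this, abs_div, abs_of_pos ha0, div_lt_iff₀ ha0]
    calc |b - a| < η ^ 4 := hdiff
      _ = η ^ 3 * η := by ring
      _ < η ^ 3 * a := by
        apply mul_lt_mul_of_pos_left haη
        positivity
  refine ⟨hkey, fun hhalf => ?_⟩
  set x := s / s' with hx
  have hxl : 1 - η ^ 3 < x := by
    have := abs_lt.mp hkey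
    linarith [this.1]
  have hxu : x < 1 + η ^ 3 := by
    have := abs_lt.mp hkey
    linarith [this.2]
  have ht0 : 0 ≤ η ^ 3 := by positivity
  constructor
  · -- exp(-(2t)) <= 1/(1+2t) <= 1 - t <= x
    have h7 : 1 + 2 * η ^ 3 ≤ Real.exp (2 * η ^ 3) := by
      have := Real.add_one_le_exp (2 * η ^ 3); linarith
    have h8 : Real.exp (-(2 * η ^ 3)) ≤ 1 / (1 + 2 * η ^ 3) := by
      rw [Real.exp_neg, ← one_div]
      apply one_div_le_one_div_of_le (by linarith) h7
    have h10 : (1 : ℝ) / (1 + 2 * η ^ 3) ≤ 1 - η ^ 3 := by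
      rw [div_le_iff₀ (by linarith)]
      nlinarith
    linarith
  · have h9 : x ≤ 1 + η ^ 3 := le_of_lt hxu
    calc x ≤ 1 + η ^ 3 := h9
      _ ≤ Real.exp (η ^ 3) := by linarith [Real.add_one_le_exp (η ^ 3)]
      _ ≤ Real.exp (2 * η ^ 3) := Real.exp_le_exp.mpr (by linarith)
end
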